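/- Verdú–Han Lemma for compound channels: Let S be a nonempty set, A and B nonempty finite types, W_s : A → PMF(B) a channel for every s ∈ S, n ≥ 1, M ≥ 1, and γ > 0. Let u : Fin M → A be any injective family of codewords and, for each s ∈ S, let D_{1,s}, …, D_{M,s} ⊆ B be pairwise disjoint decision regions, with average error probability ε_s := (1/M)·Σ_{k=1}^M W_s(u_k)(B \ D_{k,s}). Let p ∈ PMF(A) be the uniform distribution on the set of codewords {u_1, …, u_M}, and let i_s be the information density with respect to p and W_s. Then sup_{s∈S} ε_s ≥ sup_{s∈S} P_{(X,Y)∼p⊗W_s}( (1/n)·i_s(X,Y) ≤ (ln M)/n − γ ) − exp(−γ·n). -/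

import Mathlib

open Filter MeasureTheory
open scoped ENNReal

noncomputable section

/-- The output distribution `q_s(y) = Σ_x p(x)·W_s(x)(y)` of channel `Wₛ` under input `p`. -/
def outDist {A B : Type*} [Fintype A] (p : PMF A) (Wₛ : A → PMF B) (y : B) : ℝ≥0∞ :=
  ∑ x : A, p x * Wₛ x y

/-- The information density `i_s(x,y) = ln(W_s(x)(y)/q_s(y))` (natural logarithm). -/
def infoDens {A B : Type*} [Fintype A] (p : PMF A) (Wₛ : A → PMF B) (x : A) (y : B) : ℝ :=
  Real.log ((Wₛ x y).toReal / (outDist p Wₛ y).toReal)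

/-- The probability, under the joint law of `(X,Y) ∼ p ⊗ Wₛ`, that the normalized
information density satisfies `(1/n)·i_s(X,Y) ≤ r`. -/
def probInfoLE {A B : Type*} [Fintype A] [Fintype B] (p : PMF A) (Wₛ : A → PMF B)
    (n : ℕ) (r : ℝ) : ℝ≥0∞ :=
  ∑ z : A × B,
    {z' : A × B | (1 / (n : ℝ)) * infoDens p Wₛ z'.1 z'.2 ≤ r}.indicator
      (fun z' => p z'.1 * Wₛ z'.1 z'.2) z

/-- The error probability `W_s(u)(B \ D)` of codeword `u` with decision region `D`. -/
def errProb {A B : Type*} [Fintype B] (Wₛ : A → PMF B) (u : A) (D : Set B) : ℝ≥0∞ :=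
  ∑ y : B, Dᶜ.indicator (fun y' => Wₛ u y') y

/-- Verdú–Han Lemma for compound channels: for any code with injective
codewords `u : Fin M → A` and pairwise disjoint decision regions `D_{k,s}`, with `p` the
uniform distribution on the set of codewords and average error probabilities `ε_s`,
`sup_s ε_s ≥ sup_s P((1/n)·i_s(X,Y) ≤ (ln M)/n − γ) − exp(−γn)`. -/
theorem verdu_han_compound {S A B : Type*} [Nonempty S] [Fintype A] [Nonempty A]
    [DecidableEq A] [Fintype B] [Nonempty B] (W : S → A → PMF B)
    (n M : ℕ) (hn : 1 ≤ n) (hM : 1 ≤ M) (γ : ℝ) (hγ : 0 < γ)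
    (u : Fin M → A) (hu : Function.Injective u)
    (D : S → Fin M → Set B)
    (hD : ∀ s : S, Pairwise fun k l => Disjoint (D s k) (D s l))
    (p : PMF A)
    (hp : p = PMF.uniformOfFinset (Finset.univ.image u)
      ⟨u ⟨0, hM⟩, Finset.mem_image_of_mem u (Finset.mem_univ _)⟩) :
    (⨆ s : S, probInfoLE p (W s) n (Real.log M / n - γ))
        - ENNReal.ofReal (Real.exp (-(γ * n)))
      ≤ ⨆ s : S, (M : ℝ≥0∞)⁻¹ * ∑ k : Fin M, errProb (W s) (u k) (D s k) := by
  classical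
  rw [tsub_le_iff_right]
  apply iSup_le
  intro s
  refine le_trans ?_ (add_le_add_left
    (le_iSup (fun s => (M : ℝ≥0∞)⁻¹ * ∑ k : Fin M, errProb (W s) (u k) (D s k)) s) _)
  -- notation
  set E : ℝ≥0∞ := ENNReal.ofReal (Real.exp (-(γ * n))) with hE
  -- basic facts
  have hMne : (M : ℝ≥0∞) ≠ 0 := Nat.cast_ne_zero.mpr (by omega)
  have hcard : (Finset.univ.image u).card = M := by
    rw [Finset.card_image_of_injective _ hu, Finset.card_univ, Fintype.card_fin]
  have hpval : ∀ x, p x = if x ∈ Finset.univ.image u then (M : ℝ≥0∞)⁻¹ else 0 := by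
    intro x
    rw [hp]; erw [PMF.uniformOfFinset_apply]; rw [hcard]
    by_cases h : x ∈ Finset.univ.image u <;> simp [h]
  have hple : ∀ x, p x ≤ (M : ℝ≥0∞)⁻¹ := fun x => by
    rw [hpval x]; split <;> simp
  have hpuk : ∀ k, p (u k) = (M : ℝ≥0∞)⁻¹ := fun k => by
    rw [hpval]; simp
  have hq1 : ∀ y, outDist p (W s) y ≤ 1 := fun y => by
    calc outDist p (W s) y ≤ ∑ x : A, p x := by
          unfold outDist
          gcongr with x
          exact mul_le_of_le_one_right' ((W s x).coe_le_one y)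
      _ = 1 := by rw [← tsum_fintype (L := .unconditional _)]; exact p.tsum_coe
  have hqsum : ∑ y : B, outDist p (W s) y = 1 := by
    unfold outDist
    rw [Finset.sum_comm]
    have h1 : ∀ x : A, ∑ y : B, p x * W s x y = p x := fun x => by
      rw [← Finset.mul_sum, ← tsum_fintype (L := .unconditional _), (W s x).tsum_coe, mul_one]
    simp_rw [h1]
    rw [← tsum_fintype (L := .unconditional _)]; exact p.tsum_coe
  set corr : A × B → Prop := fun z => ∃ k, z.1 = u k ∧ z.2 ∈ D s k with hcorr
  -- pointwise key bound
  have key : ∀ z : A × B,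
      ({z' : A × B | (1 / (n : ℝ)) * infoDens p (W s) z'.1 z'.2 ≤ Real.log M / n - γ}.indicator
        (fun z' => p z'.1 * W s z'.1 z'.2) z)
      ≤ (if corr z then 0 else p z.1 * W s z.1 z.2)
        + (if corr z then E * outDist p (W s) z.2 else 0) := by
    rintro ⟨x, y⟩
    rw [Set.indicator_apply]
    by_cases hc : corr (x, y)
    · rw [if_pos hc, if_pos hc, zero_add]
      split_ifs with hz
      · -- main analytic bound
        by_cases hpx : p x = 0
        · simp [hpx]
        by_cases hW : W s x y = 0
        · simp [hW]
        have hWt : W s x y ≠ ⊤ := (W s x).apply_ne_top y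
        have hqle : outDist p (W s) y ≤ 1 := hq1 y
        have hqt : outDist p (W s) y ≠ ⊤ := (hqle.trans_lt ENNReal.one_lt_top).ne
        have hqpos : 0 < outDist p (W s) y := by
          have hle : p x * W s x y ≤ outDist p (W s) y :=
            Finset.single_le_sum (f := fun x' => p x' * W s x' y)
              (fun _ _ => zero_le) (Finset.mem_univ x)
          exact lt_of_lt_of_le (ENNReal.mul_pos hpx hW) hle
        set Wr := (W s x y).toReal with hWr
        set qr := (outDist p (W s) y).toReal with hqr
        have hWrpos : 0 < Wr := ENNReal.toReal_pos hW hWt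
        have hqrpos : 0 < qr := ENNReal.toReal_pos hqpos.ne' hqt
        have hn1 : (1 : ℝ) ≤ n := by exact_mod_cast hn
        have hnpos : (0 : ℝ) < n := by linarith
        have hMpos : (0 : ℝ) < M := by
          have : (1 : ℝ) ≤ M := by exact_mod_cast hM
          linarith
        have hz' : Real.log (Wr / qr) / n ≤ Real.log M / n - γ := by
          have hz2 : (1 / (n : ℝ)) * infoDens p (W s) x y ≤ Real.log M / n - γ := hz
          rw [infoDens] at hz2
          calc Real.log (Wr / qr) / n
              = (1 / (n : ℝ)) * Real.log ((W s x y).toReal / (outDist p (W s) y).toReal) := by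
                rw [hWr, hqr]; ring
            _ ≤ _ := hz2
        have hlog : Real.log (Wr / qr) ≤ Real.log M - γ * n := by
          rw [div_le_iff₀ hnpos] at hz'
          calc Real.log (Wr / qr) ≤ (Real.log M / n - γ) * n := hz'
            _ = Real.log M - γ * n := by field_simp
        have hratio : Wr / qr ≤ (M : ℝ) * Real.exp (-(γ * n)) := by
          calc Wr / qr ≤ Real.exp (Real.log M - γ * n) :=
              (Real.log_le_iff_le_exp (by positivity)).mp hlog
            _ = (M : ℝ) * Real.exp (-(γ * n)) := by
              rw [sub_eq_add_neg, Real.exp_add, Real.exp_log hMpos]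
        have hWle : Wr ≤ qr * ((M : ℝ) * Real.exp (-(γ * n))) := by
          rwa [div_le_iff₀ hqrpos, mul_comm] at hratio
        calc p x * W s x y ≤ (M : ℝ≥0∞)⁻¹ * W s x y := mul_le_mul_left (hple x) _
          _ = (M : ℝ≥0∞)⁻¹ * ENNReal.ofReal Wr := by rw [hWr, ENNReal.ofReal_toReal hWt]
          _ ≤ (M : ℝ≥0∞)⁻¹ * ENNReal.ofReal (qr * ((M : ℝ) * Real.exp (-(γ * n)))) := by
              gcongr
          _ = (M : ℝ≥0∞)⁻¹ * ((M : ℝ≥0∞) * (E * outDist p (W s) y)) := by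
              rw [ENNReal.ofReal_mul hqrpos.le, ENNReal.ofReal_mul hMpos.le,
                ENNReal.ofReal_natCast, hqr, ENNReal.ofReal_toReal hqt, hE]
              ring
          _ = E * outDist p (W s) y := by
              rw [← mul_assoc, ENNReal.inv_mul_cancel hMne (ENNReal.natCast_ne_top M), one_mul]
      · exact zero_le
    · rw [if_neg hc, if_neg hc, add_zero]
      split_ifs with hz
      · exact le_refl _
      · exact zero_le
  -- sum of the error part
  have hh : (∑ z : A × B, if corr z then 0 else p z.1 * W s z.1 z.2)
      = (M : ℝ≥0∞)⁻¹ * ∑ k : Fin M, errProb (W s) (u k) (D s k) := by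
    rw [Fintype.sum_prod_type]
    have hzero : ∀ x ∈ Finset.univ, x ∉ Finset.univ.image u →
        (∑ y : B, if corr (x, y) then 0 else p x * W s x y) = 0 := by
      intro x _ hx
      have hpx : p x = 0 := by rw [hpval x, if_neg hx]
      simp [hpx]
    rw [← Finset.sum_subset (Finset.subset_univ _) hzero]
    rw [Finset.sum_image (fun a _ b _ h => hu h)]
    rw [Finset.mul_sum]
    refine Finset.sum_congr rfl fun k _ => ?_
    unfold errProb
    rw [Finset.mul_sum]
    refine Finset.sum_congr rfl fun y _ => ?_
    by_cases hy : y ∈ D s k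
    · have hck : corr (u k, y) := ⟨k, rfl, hy⟩
      rw [if_pos hck, Set.indicator_of_notMem (by simpa using hy), mul_zero]
    · have hck : ¬ corr (u k, y) := by
        rintro ⟨k', hk', hy'⟩
        exact hy (hu hk' ▸ hy')
      rw [if_neg hck, Set.indicator_of_mem (by simpa using hy), hpuk k]
  -- sum of the information-density part
  have hg : (∑ z : A × B, if corr z then E * outDist p (W s) z.2 else 0) ≤ E := by
    rw [Fintype.sum_prod_type, Finset.sum_comm]
    calc ∑ y : B, ∑ x : A, (if corr (x, y) then E * outDist p (W s) y else 0)
        ≤ ∑ y : B, E * outDist p (W s) y := by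
          refine Finset.sum_le_sum fun y _ => ?_
          by_cases hy : ∃ k, y ∈ D s k
          · obtain ⟨k₀, hk₀⟩ := hy
            have huniq : ∀ x : A, corr (x, y) ↔ x = u k₀ := by
              intro x
              constructor
              · rintro ⟨k, rfl, hk⟩
                have hkk : k = k₀ := by
                  by_contra hne
                  exact (Set.disjoint_left.mp (hD s hne) hk) hk₀
                rw [hkk]
              · rintro rfl
                exact ⟨k₀, rfl, hk₀⟩
            calc ∑ x : A, (if corr (x, y) then E * outDist p (W s) y else 0)
                = ∑ x : A, (if x = u k₀ then E * outDist p (W s) y else 0) :=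
                  Finset.sum_congr rfl fun x _ => if_congr (huniq x) rfl rfl
              _ ≤ E * outDist p (W s) y := by
                  rw [Finset.sum_ite_eq' Finset.univ (u k₀)]
                  simp
          · have hnone : ∀ x : A, ¬ corr (x, y) := by
              rintro x ⟨k, _, hk⟩
              exact hy ⟨k, hk⟩
            simp [hnone]
      _ = E * ∑ y : B, outDist p (W s) y := by rw [Finset.mul_sum]
      _ = E := by rw [hqsum, mul_one]
  unfold probInfoLE
  calc (∑ z : A × B,
        {z' : A × B | (1 / (n : ℝ)) * infoDens p (W s) z'.1 z'.2 ≤ Real.log M / n - γ}.indicator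
          (fun z' => p z'.1 * W s z'.1 z'.2) z)
      ≤ ∑ z : A × B, ((if corr z then 0 else p z.1 * W s z.1 z.2)
          + (if corr z then E * outDist p (W s) z.2 else 0)) :=
        Finset.sum_le_sum fun z _ => key z
    _ = (∑ z : A × B, if corr z then 0 else p z.1 * W s z.1 z.2)
          + ∑ z : A × B, (if corr z then E * outDist p (W s) z.2 else 0) :=
        Finset.sum_add_distrib
    _ ≤ (M : ℝ≥0∞)⁻¹ * (∑ k : Fin M, errProb (W s) (u k) (D s k)) + E :=
        add_le_add hh.le hg

end
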